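/- Integrated Gradients satisfies the dummy axiom: if f : (Fin n → ℝ) → ℝ is continuously differentiable and does not depend on coordinate i, i.e. f(x) = f(y) whenever x_j = y_j for all j ≠ i, then IG_i(f,a,b) = 0 for all points a, b ∈ ℝⁿ. -/

import Mathlib

noncomputable def IG {n : ℕ} (f : (Fin n → ℝ) → ℝ) (a b : Fin n → ℝ) (i : Fin n) : ℝ :=
  (b i - a i) * ∫ t in (0:ℝ)..1, fderiv ℝ f (fun j => a j + t * (b j - a j)) (Pi.single i 1)

theorem IG_dummy (n : ℕ) (f : (Fin n → ℝ) → ℝ) (hf : ContDiff ℝ 1 f) (i : Fin n)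
    (hdummy : ∀ x y : Fin n → ℝ, (∀ j, j ≠ i → x j = y j) → f x = f y)
    (a b : Fin n → ℝ) :
    IG f a b i = 0 := by
  have hzero : ∀ x : Fin n → ℝ, fderiv ℝ f x (Pi.single i 1) = 0 := by
    intro x
    set e : Fin n → ℝ := Pi.single i 1 with he
    have hu : HasDerivAt (fun s : ℝ => x + s • e) (Pi.single i 1) 0 := by
      simpa using ((hasDerivAt_id (0:ℝ)).smul_const (e)).const_add x
    have hfd : DifferentiableAt ℝ f (x + (0:ℝ) • e) :=
      (hf.differentiable one_ne_zero).differentiableAt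
    have h1 : HasDerivAt (fun s : ℝ => f (x + s • e))
        (fderiv ℝ f (x + (0:ℝ) • e) (Pi.single i 1)) 0 :=
      hfd.hasFDerivAt.comp_hasDerivAt 0 hu
    have hconst : (fun s : ℝ => f (x + s • e)) = fun _ => f x := by
      funext s
      apply hdummy
      intro j hj
      simp [he, Pi.single_eq_of_ne hj]
    rw [hconst] at h1
    have h2 := (hasDerivAt_const (0:ℝ) (f x)).unique h1
    simpa using h2.symm
  unfold IG
  simp [hzero]
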